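/- Let D : X × X → [0, ∞) be ½-Lipschitz with respect to the max-metric on X × X, where (X, d) is a metric space. Fix a ball B = B(z, r), points x, x₀ ∈ B, and let B₁ = {y ∉ 2B : D(x₀, y) ≤ d(x₀, y) and d(x, y) < D(x, y)}. Then B₁ is contained in an annulus: B₁ ⊆ {y : r₁ ≤ d(x₀, y) ≤ 100·r₁}, where r₁ = inf{d(x₀, y) : y ∈ B₁} (interpreting the inclusion as vacuous if B₁ = ∅). -/
import Mathlib


/-- Annulus containment in the proof of the truncation stability of generalised
standard kernels: with `D : X × X → [0,∞)` a `½`-Lipschitz function for the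
max-metric, a closed ball `B = B(z,r)`, points `x, x₀ ∈ B`, and
`B₁ = {y ∉ 2B : D(x₀,y) ≤ d(x₀,y) and d(x,y) < D(x,y)}`, the set `B₁` is
contained in the annulus `{y : r₁ ≤ d(x₀,y) ≤ 100 r₁}` with
`r₁ = inf {d(x₀,y) : y ∈ B₁}`. -/
theorem stmt13 {X : Type*} [MetricSpace X] (D : X × X → ℝ)
    (hD0 : ∀ p : X × X, 0 ≤ D p)
    (hDlip : ∀ a b a' b' : X,
      |D (a, b) - D (a', b')| ≤ (1 / 2) * max (dist a a') (dist b b'))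
    (z : X) (r : ℝ) (x x₀ : X) (hx : dist x z ≤ r) (hx₀ : dist x₀ z ≤ r)
    (B₁ : Set X)
    (hB₁ : B₁ = {y : X | ¬ dist y z ≤ 2 * r ∧ D (x₀, y) ≤ dist x₀ y ∧
      dist x y < D (x, y)}) :
    ∀ y ∈ B₁,
      sInf ((fun y => dist x₀ y) '' B₁) ≤ dist x₀ y ∧
      dist x₀ y ≤ 100 * sInf ((fun y => dist x₀ y) '' B₁) := by
  intro y hy
  have hbdd : BddBelow ((fun y => dist x₀ y) '' B₁) := by
    refine ⟨0, ?_⟩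
    rintro t ⟨w, _, rfl⟩
    exact dist_nonneg
  have hmem : dist x₀ y ∈ (fun y => dist x₀ y) '' B₁ := ⟨y, hy, rfl⟩
  refine ⟨csInf_le hbdd hmem, ?_⟩
  have key : ∀ y' ∈ B₁, dist x₀ y ≤ 100 * dist x₀ y' := by
    intro y' hy'
    rw [hB₁] at hy hy'
    obtain ⟨hy1, hy2, hy3⟩ := hy
    obtain ⟨hy1', hy2', hy3'⟩ := hy'
    push_neg at hy1 hy1'
    have hxx0 : dist x x₀ ≤ 2 * r := by
      have := dist_triangle x z x₀
      have h2 : dist z x₀ = dist x₀ z := dist_comm z x₀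
      linarith [dist_triangle x z x₀]
    have h1 : D (x, y) - D (x, y') ≤ (1/2) * max (dist x x) (dist y y') :=
      (abs_le.mp (hDlip x y x y')).2
    have h1' : max (dist x x) (dist y y') = dist y y' := by
      simp [dist_nonneg]
    have h2 : D (x, y') - D (x₀, y') ≤ (1/2) * max (dist x x₀) (dist y' y') :=
      (abs_le.mp (hDlip x y' x₀ y')).2
    have h2' : max (dist x x₀) (dist y' y') = dist x x₀ := by
      simp [dist_nonneg]
    rw [h1'] at h1
    rw [h2'] at h2
    have htri1 : dist x₀ y ≤ dist x₀ x + dist x y := dist_triangle x₀ x y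
    have htri2 : dist y y' ≤ dist y x₀ + dist x₀ y' := dist_triangle y x₀ y'
    have hc1 : dist y x₀ = dist x₀ y := dist_comm y x₀
    have hc2 : dist x₀ x = dist x x₀ := dist_comm x₀ x
    have hry' : r < dist x₀ y' := by
      have := dist_triangle y' x₀ z
      have hc3 : dist y' x₀ = dist x₀ y' := dist_comm y' x₀
      linarith
    have hr : 0 ≤ r := le_trans dist_nonneg hx
    linarith
  have : dist x₀ y / 100 ≤ sInf ((fun y => dist x₀ y) '' B₁) := by
    apply le_csInf ⟨dist x₀ y, hmem⟩
    rintro t ⟨w, hw, rfl⟩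
    linarith [key w hw]
  linarith
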